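/- Let Q be a group with a generating map i : A → Q, and define the Margolis–Meakin data as pairs (K, g) where g ∈ Q and K is a finite set of 'geometric edges' of the Cayley graph of Q (elements of Q × A) such that the subgraph spanned by K together with the vertices 1 and g is connected and contains 1 and g. With multiplication (K, g)(L, h) = (K ∪ gL, gh), where gL = {(g·q, a) : (q, a) ∈ L}, and inversion (K, g)⁻¹ = (g⁻¹K, g⁻¹), this forms an inverse monoid with identity (∅, 1). -/

import Mathlib

/-- Adjacency relation on the Cayley graph of `Q` induced by a set of
positive edges `K ⊆ Q × A` (edge `(q, a)` joins `q` and `q * i a`). -/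
def MMRel {Q A : Type*} [Group Q] (i : A → Q) (K : Finset (Q × A)) (q q' : Q) : Prop :=
  ∃ a, ((q, a) ∈ K ∧ q' = q * i a) ∨ ((q', a) ∈ K ∧ q = q' * i a)

/-- Vertex set of the subgraph spanned by the edge set `K` together with the
vertices `1` and `g`. -/
def MMVtx {Q A : Type*} [Group Q] (i : A → Q) (K : Finset (Q × A)) (g : Q) : Set Q :=
  ({1, g} : Set Q) ∪ {q | ∃ a, (q, a) ∈ K} ∪ {v | ∃ q a, (q, a) ∈ K ∧ v = q * i a}

/-- The subgraph spanned by `K` with the vertices `1` and `g` is connected. -/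
def MMConn {Q A : Type*} [Group Q] (i : A → Q) (K : Finset (Q × A)) (g : Q) : Prop :=
  ∀ v ∈ MMVtx i K g, Relation.ReflTransGen (MMRel i K) 1 v

/-- The carrier of the Margolis–Meakin expansion: pairs `(K, g)` such that the
spanned subgraph of the Cayley graph is connected and contains `1` and `g`. -/
def MM {Q A : Type*} [Group Q] (i : A → Q) : Type _ :=
  {p : Finset (Q × A) × Q // MMConn i p.1 p.2}

/-- Raw multiplication `(K, g)(L, h) = (K ∪ gL, gh)`. -/
def MMpmul {Q A : Type*} [Group Q] [DecidableEq Q] [DecidableEq A]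
    (p q : Finset (Q × A) × Q) : Finset (Q × A) × Q :=
  (p.1 ∪ q.1.image (fun e => (p.2 * e.1, e.2)), p.2 * q.2)

/-- Raw inversion `(K, g)⁻¹ = (g⁻¹K, g⁻¹)`. -/
def MMpinv {Q A : Type*} [Group Q] [DecidableEq Q] [DecidableEq A]
    (p : Finset (Q × A) × Q) : Finset (Q × A) × Q :=
  (p.1.image (fun e => (p.2⁻¹ * e.1, e.2)), p.2⁻¹)

section Aux

variable {Q A : Type*} [Group Q] [DecidableEq Q] [DecidableEq A] {i : A → Q}

lemma mmrel_mono {K K' : Finset (Q × A)} (hKK : K ⊆ K') {q q' : Q}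
    (h : MMRel i K q q') : MMRel i K' q q' := by
  obtain ⟨a, h | h⟩ := h
  · exact ⟨a, Or.inl ⟨hKK h.1, h.2⟩⟩
  · exact ⟨a, Or.inr ⟨hKK h.1, h.2⟩⟩

lemma mmrel_symm {K : Finset (Q × A)} {q q' : Q}
    (h : MMRel i K q q') : MMRel i K q' q := by
  obtain ⟨a, h | h⟩ := h
  · exact ⟨a, Or.inr h⟩
  · exact ⟨a, Or.inl h⟩

lemma mmrel_translate (g : Q) {K : Finset (Q × A)} {q q' : Q}
    (h : MMRel i K q q') :
    MMRel i (K.image (fun e => (g * e.1, e.2))) (g * q) (g * q') := by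
  obtain ⟨a, h | h⟩ := h
  · exact ⟨a, Or.inl ⟨Finset.mem_image.2 ⟨(q, a), h.1, rfl⟩, by rw [h.2, mul_assoc]⟩⟩
  · exact ⟨a, Or.inr ⟨Finset.mem_image.2 ⟨(q', a), h.1, rfl⟩, by rw [h.2, mul_assoc]⟩⟩

lemma reach_mono {K K' : Finset (Q × A)} (hKK : K ⊆ K') {q q' : Q}
    (h : Relation.ReflTransGen (MMRel i K) q q') :
    Relation.ReflTransGen (MMRel i K') q q' :=
  Relation.ReflTransGen.mono (fun _ _ => mmrel_mono hKK) _ _ h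

lemma reach_symm {K : Finset (Q × A)} {q q' : Q}
    (h : Relation.ReflTransGen (MMRel i K) q q') :
    Relation.ReflTransGen (MMRel i K) q' q := by
  induction h with
  | refl => exact Relation.ReflTransGen.refl
  | tail _ hr ih => exact Relation.ReflTransGen.head (mmrel_symm hr) ih

lemma reach_translate (g : Q) {K : Finset (Q × A)} {q q' : Q}
    (h : Relation.ReflTransGen (MMRel i K) q q') :
    Relation.ReflTransGen (MMRel i (K.image (fun e => (g * e.1, e.2)))) (g * q) (g * q') := by
  induction h with
  | refl => exact Relation.ReflTransGen.refl
  | tail _ hr ih => exact ih.tail (mmrel_translate g hr)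

lemma one_mem_vtx {K : Finset (Q × A)} {g : Q} : (1 : Q) ∈ MMVtx i K g :=
  Or.inl (Or.inl (Or.inl rfl))

lemma snd_mem_vtx {K : Finset (Q × A)} {g : Q} : g ∈ MMVtx i K g :=
  Or.inl (Or.inl (Or.inr rfl))

lemma left_mem_vtx {K : Finset (Q × A)} {g q : Q} {a : A} (h : (q, a) ∈ K) :
    q ∈ MMVtx i K g := Or.inl (Or.inr ⟨a, h⟩)

lemma right_mem_vtx {K : Finset (Q × A)} {g q : Q} {a : A} (h : (q, a) ∈ K) :
    q * i a ∈ MMVtx i K g := Or.inr ⟨q, a, h, rfl⟩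

lemma conn_mul {K L : Finset (Q × A)} {g h : Q}
    (hK : MMConn i K g) (hL : MMConn i L h) :
    MMConn i (K ∪ L.image (fun e => (g * e.1, e.2))) (g * h) := by
  set U := K ∪ L.image (fun e => (g * e.1, e.2)) with hU
  have h1g : Relation.ReflTransGen (MMRel i U) 1 g :=
    reach_mono Finset.subset_union_left (hK g snd_mem_vtx)
  have key : ∀ w ∈ MMVtx i L h, Relation.ReflTransGen (MMRel i U) 1 (g * w) := by
    intro w hw
    have := reach_translate g (hL w hw)
    rw [mul_one] at this
    exact h1g.trans (reach_mono Finset.subset_union_right this)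
  have keyK : ∀ v ∈ MMVtx i K g, Relation.ReflTransGen (MMRel i U) 1 v := fun v hv =>
    reach_mono Finset.subset_union_left (hK v hv)
  intro v hv
  rcases hv with ((hv | hv) | ⟨a, hv⟩) | ⟨q, a, hv, rfl⟩
  · exact hv ▸ Relation.ReflTransGen.refl
  · exact hv ▸ key h snd_mem_vtx
  · rcases Finset.mem_union.1 hv with hv | hv
    · exact keyK v (left_mem_vtx hv)
    · obtain ⟨⟨q₀, a₀⟩, hq₀, he⟩ := Finset.mem_image.1 hv
      injection he with he1 he2
      subst he1; subst he2
      exact key q₀ (left_mem_vtx hq₀)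
  · rcases Finset.mem_union.1 hv with hv | hv
    · exact keyK _ (right_mem_vtx hv)
    · obtain ⟨⟨q₀, a₀⟩, hq₀, he⟩ := Finset.mem_image.1 hv
      injection he with he1 he2
      subst he1; subst he2
      have := key (q₀ * i a₀) (right_mem_vtx hq₀)
      rwa [← mul_assoc] at this
  
lemma conn_inv {K : Finset (Q × A)} {g : Q} (hK : MMConn i K g) :
    MMConn i (K.image (fun e => (g⁻¹ * e.1, e.2))) g⁻¹ := by
  have main : ∀ v ∈ MMVtx i K g,
      Relation.ReflTransGen (MMRel i (K.image (fun e => (g⁻¹ * e.1, e.2)))) 1 (g⁻¹ * v) := by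
    intro v hv
    have hgv : Relation.ReflTransGen (MMRel i K) g v :=
      (reach_symm (hK g snd_mem_vtx)).trans (hK v hv)
    have := reach_translate g⁻¹ hgv
    rwa [inv_mul_cancel] at this
  intro v hv
  rcases hv with ((hv | hv) | ⟨a, hv⟩) | ⟨q, a, hv, rfl⟩
  · exact hv ▸ Relation.ReflTransGen.refl
  · rw [Set.mem_singleton_iff] at hv
    subst hv
    have := main 1 one_mem_vtx
    rwa [mul_one] at this
  · obtain ⟨⟨q₀, a₀⟩, hq₀, he⟩ := Finset.mem_image.1 hv
    injection he with he1 he2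
    subst he1; subst he2
    exact main q₀ (left_mem_vtx hq₀)
  · obtain ⟨⟨q₀, a₀⟩, hq₀, he⟩ := Finset.mem_image.1 hv
    injection he with he1 he2
    subst he1; subst he2
    have := main (q₀ * i a₀) (right_mem_vtx hq₀)
    rwa [← mul_assoc] at this

lemma conn_one : MMConn i (∅ : Finset (Q × A)) 1 := by
  intro v hv
  rcases hv with ((hv | hv) | ⟨a, hv⟩) | ⟨q, a, hv, rfl⟩
  · exact hv ▸ Relation.ReflTransGen.refl
  · exact hv ▸ Relation.ReflTransGen.refl
  · simp at hv
  · simp at hv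

end Aux

/-- The Margolis–Meakin data with multiplication `(K,g)(L,h) = (K ∪ gL, gh)`
and inversion `(K,g)⁻¹ = (g⁻¹K, g⁻¹)` forms an inverse monoid with identity
`(∅, 1)`. -/
theorem margolis_meakin_inverse_monoid {Q A : Type*}
    [Group Q] [DecidableEq Q] [DecidableEq A] (i : A → Q) :
    ∃ (mul : MM i → MM i → MM i) (inv : MM i → MM i) (one : MM i),
      (∀ x y, (mul x y).val = MMpmul x.val y.val) ∧
      (∀ x, (inv x).val = MMpinv x.val) ∧
      one.val = (∅, 1) ∧
      (∀ x y z, mul (mul x y) z = mul x (mul y z)) ∧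
      (∀ x, mul one x = x) ∧
      (∀ x, mul x one = x) ∧
      (∀ x, mul (mul x (inv x)) x = x) ∧
      (∀ x, mul (mul (inv x) x) (inv x) = inv x) ∧
      (∀ x y, mul (mul x y) x = x → mul (mul y x) y = y → y = inv x) := by
  refine ⟨fun x y => ⟨MMpmul x.val y.val, conn_mul x.2 y.2⟩,
    fun x => ⟨MMpinv x.val, conn_inv x.2⟩, ⟨(∅, 1), conn_one⟩,
    fun _ _ => rfl, fun _ => rfl, rfl, ?_, ?_, ?_, ?_, ?_, ?_⟩
  · rintro ⟨⟨K, g⟩, hx⟩ ⟨⟨L, h⟩, hy⟩ ⟨⟨M, m⟩, hz⟩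
    apply Subtype.ext
    simp only [MMpmul]
    refine Prod.ext ?_ (mul_assoc g h m)
    simp [Finset.image_union, Finset.image_image, Function.comp_def, mul_assoc,
      Finset.union_assoc]
  · rintro ⟨⟨K, g⟩, hx⟩
    apply Subtype.ext
    simp only [MMpmul]
    refine Prod.ext ?_ (one_mul g)
    ext e
    simp
  · rintro ⟨⟨K, g⟩, hx⟩
    apply Subtype.ext
    simp only [MMpmul]
    refine Prod.ext ?_ (mul_one g)
    simp
  · rintro ⟨⟨K, g⟩, hx⟩
    apply Subtype.ext
    simp only [MMpmul, MMpinv]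
    refine Prod.ext ?_ (by group)
    ext e
    simp [Finset.image_image, Function.comp]
  · rintro ⟨⟨K, g⟩, hx⟩
    apply Subtype.ext
    simp only [MMpmul, MMpinv]
    refine Prod.ext ?_ (by group)
    ext e
    simp [Finset.image_image, Function.comp]
  · rintro ⟨⟨K, g⟩, hx⟩ ⟨⟨L, h⟩, hy⟩ h1 h2
    have e1 := congrArg (fun z : MM i => z.val) h1
    have e2 := congrArg (fun z : MM i => z.val) h2
    simp only [MMpmul] at e1 e2
    have hsnd : g * h * g = g := congrArg Prod.snd e1
    have hhg : h = g⁻¹ := by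
      have hgh1 : g * h = 1 := by
        have h' : (g * h) * g = 1 * g := by rw [hsnd, one_mul]
        exact mul_right_cancel h'
      exact eq_inv_of_mul_eq_one_right hgh1
    subst hhg
    have hfst1 : K ∪ L.image (fun e => (g * e.1, e.2)) ∪
        K.image (fun e => ((g * g⁻¹) * e.1, e.2)) = K := congrArg Prod.fst e1
    have hfst2 : L ∪ K.image (fun e => (g⁻¹ * e.1, e.2)) ∪
        L.image (fun e => ((g⁻¹ * g) * e.1, e.2)) = L := congrArg Prod.fst e2
    apply Subtype.ext
    refine Prod.ext ?_ rfl
    show L = K.image (fun e => (g⁻¹ * e.1, e.2))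
    apply Finset.Subset.antisymm
    · intro e he
      have hmem : (g * e.1, e.2) ∈ K := by
        have : (g * e.1, e.2) ∈ K ∪ L.image (fun e => (g * e.1, e.2)) ∪
            K.image (fun e => ((g * g⁻¹) * e.1, e.2)) := by
          exact Finset.mem_union_left _ (Finset.mem_union_right _
            (Finset.mem_image.2 ⟨e, he, rfl⟩))
        rwa [hfst1] at this
      exact Finset.mem_image.2 ⟨(g * e.1, e.2), hmem, by simp⟩
    · intro e he
      have : e ∈ L ∪ K.image (fun e => (g⁻¹ * e.1, e.2)) ∪
          L.image (fun e => ((g⁻¹ * g) * e.1, e.2)) :=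
        Finset.mem_union_left _ (Finset.mem_union_right _ he)
      rwa [hfst2] at this
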